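/- For the δ = 3 case where each composition (x_1, x_2, x_3) of n−1 into three nonnegative parts has probability 2/(n(n+1)), the quantity P_c(n) = Σ_{max x_j < n/2} P + (1/2)Σ_{max x_j = n/2} P equals 1/4 + (3/4)·1/(2⌊n/2⌋ + 1). -/

import Mathlib

open Finset

lemma mem3 {m : ℕ} {x : Fin 3 → ℕ} :
    x ∈ Finset.Nat.antidiagonalTuple 3 m ↔ x 0 + x 1 + x 2 = m := by
  rw [Finset.Nat.mem_antidiagonalTuple, Fin.sum_univ_three]

lemma sup3 (x : Fin 3 → ℕ) : Finset.univ.sup x = x 0 ⊔ (x 1 ⊔ x 2) := by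
  simp [show (univ : Finset (Fin 3)) = {0,1,2} from rfl, Finset.sup_insert]

lemma sum_sub (M : ℕ) : (∑ a ∈ range M, (M - a)) * 2 = M * (M+1) := by
  have h := Finset.sum_range_reflect (fun a => a) (M+1)
  simp only [Nat.add_sub_cancel] at h
  rw [Finset.sum_range_succ, Nat.sub_self, add_zero] at h
  have g := Finset.sum_range_id_mul_two (M+1)
  simp only [Nat.add_sub_cancel] at g
  rw [h, g]; ring

lemma fiber_card (N a : ℕ) (ha : a < N + 1) :
    ((Finset.Nat.antidiagonalTuple 3 N).filter (fun x => x 0 = a)).card = N + 1 - a := by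
  rw [show N + 1 - a = (Finset.HasAntidiagonal.antidiagonal (N - a)).card by
    rw [Finset.Nat.card_antidiagonal]; omega]
  apply Finset.card_bij (fun x _ => (x 1, x 2))
  · intro x hx
    simp only [mem_filter, mem3] at hx
    simp only [Finset.HasAntidiagonal.mem_antidiagonal]
    omega
  · intro x hx y hy h
    simp only [mem_filter, mem3] at hx hy
    simp only [Prod.mk.injEq] at h
    funext i
    fin_cases i
    · show x 0 = y 0; omega
    · show x 1 = y 1; omega
    · show x 2 = y 2; omega
  · intro p hp
    simp only [Finset.HasAntidiagonal.mem_antidiagonal] at hp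
    refine ⟨![a, p.1, p.2], ?_, ?_⟩
    · simp only [mem_filter, mem3]
      simp
      omega
    · simp

lemma card_adt3 (N : ℕ) : (Finset.Nat.antidiagonalTuple 3 N).card * 2 = (N+1)*(N+2) := by
  have h1 : (Finset.Nat.antidiagonalTuple 3 N).card
      = ∑ a ∈ range (N+1), ((Finset.Nat.antidiagonalTuple 3 N).filter (fun x => x 0 = a)).card := by
    apply Finset.card_eq_sum_card_fiberwise
    intro x hx
    rw [Finset.mem_coe, mem3] at hx
    simp only [Finset.mem_coe, mem_range]; omega
  have h2 : ∀ a ∈ range (N+1),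
      ((Finset.Nat.antidiagonalTuple 3 N).filter (fun x => x 0 = a)).card = N + 1 - a := by
    intro a ha
    exact fiber_card N a (mem_range.mp ha)
  rw [h1, Finset.sum_congr rfl h2]
  have hs := sum_sub (N+1)
  calc (∑ a ∈ range (N+1), (N + 1 - a)) * 2 = (N+1)*(N+2) := by
        rw [hs]

lemma refl_card (m c : ℕ) (h1 : 2*c ≤ m) (h2 : m ≤ 3*c) :
    ((Finset.Nat.antidiagonalTuple 3 m).filter (fun x => x 0 ≤ c ∧ x 1 ≤ c ∧ x 2 ≤ c)).card
      = (Finset.Nat.antidiagonalTuple 3 (3*c - m)).card := by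
  apply Finset.card_bij (fun x _ => fun i => c - x i)
  · intro x hx
    simp only [mem_filter, mem3] at hx ⊢
    omega
  · intro x hx y hy h
    simp only [mem_filter, mem3] at hx hy
    have e0 := congrFun h 0
    have e1 := congrFun h 1
    have e2 := congrFun h 2
    funext i
    fin_cases i
    · show x 0 = y 0; omega
    · show x 1 = y 1; omega
    · show x 2 = y 2; omega
  · intro y hy
    simp only [mem3] at hy
    refine ⟨fun i => c - y i, ?_, ?_⟩
    · simp only [mem_filter, mem3]
      omega
    · funext i
      fin_cases i
      · show c - (c - y 0) = y 0; omega
      · show c - (c - y 1) = y 1; omega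
      · show c - (c - y 2) = y 2; omega

lemma A_even (k : ℕ) (hk : 1 ≤ k) :
    ((Finset.Nat.antidiagonalTuple 3 (2*k - 1)).filter
      (fun x => x 0 ≤ k - 1 ∧ x 1 ≤ k - 1 ∧ x 2 ≤ k - 1)).card * 2 = (k-1)*k := by
  rcases Nat.lt_or_ge k 2 with h | h
  · have hk1 : k = 1 := by omega
    subst hk1
    rw [Finset.filter_eq_empty_iff.mpr]
    · simp
    · intro x hx
      rw [mem3] at hx
      simp only [not_and]
      omega
  · obtain ⟨j, rfl⟩ : ∃ j, k = j + 2 := ⟨k - 2, by omega⟩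
    rw [refl_card (2*(j+2) - 1) (j+2-1) (by omega) (by omega)]
    rw [show 3*(j+2-1) - (2*(j+2) - 1) = j from by omega]
    rw [card_adt3 j, show j+2-1 = j+1 from by omega]

lemma A_odd (k : ℕ) :
    ((Finset.Nat.antidiagonalTuple 3 (2*k)).filter
      (fun x => x 0 ≤ k ∧ x 1 ≤ k ∧ x 2 ≤ k)).card * 2 = (k+1)*(k+2) := by
  rw [refl_card (2*k) k (by omega) (by omega),
    show 3*k - 2*k = k from by omega]
  exact card_adt3 k

lemma Bi_card0 (k : ℕ) (hk : 1 ≤ k) :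
    ((Finset.Nat.antidiagonalTuple 3 (2*k - 1)).filter
      (fun x => (x 0 ⊔ (x 1 ⊔ x 2) = k) ∧ x 0 = k)).card = k := by
  conv_rhs => rw [← Finset.card_range k]
  apply Finset.card_bij (fun x _ => x 1)
  · intro x hx
    simp only [mem_filter, mem3] at hx
    simp only [mem_range]
    omega
  · intro x hx y hy h
    simp only [mem_filter, mem3] at hx hy
    funext i
    fin_cases i
    · show x 0 = y 0; omega
    · show x 1 = y 1; omega
    · show x 2 = y 2; omega
  · intro a ha
    simp only [mem_range] at ha
    refine ⟨![k, a, k - 1 - a], ?_, ?_⟩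
    · simp only [mem_filter, mem3]
      simp
      omega
    · simp

lemma Bi_card1 (k : ℕ) (hk : 1 ≤ k) :
    ((Finset.Nat.antidiagonalTuple 3 (2*k - 1)).filter
      (fun x => (x 0 ⊔ (x 1 ⊔ x 2) = k) ∧ x 1 = k)).card = k := by
  conv_rhs => rw [← Finset.card_range k]
  apply Finset.card_bij (fun x _ => x 0)
  · intro x hx
    simp only [mem_filter, mem3] at hx
    simp only [mem_range]
    omega
  · intro x hx y hy h
    simp only [mem_filter, mem3] at hx hy
    funext i
    fin_cases i
    · show x 0 = y 0; omega
    · show x 1 = y 1; omega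
    · show x 2 = y 2; omega
  · intro a ha
    simp only [mem_range] at ha
    refine ⟨![a, k, k - 1 - a], ?_, ?_⟩
    · simp only [mem_filter, mem3]
      simp
      omega
    · simp

lemma Bi_card2 (k : ℕ) (hk : 1 ≤ k) :
    ((Finset.Nat.antidiagonalTuple 3 (2*k - 1)).filter
      (fun x => (x 0 ⊔ (x 1 ⊔ x 2) = k) ∧ x 2 = k)).card = k := by
  conv_rhs => rw [← Finset.card_range k]
  apply Finset.card_bij (fun x _ => x 0)
  · intro x hx
    simp only [mem_filter, mem3] at hx
    simp only [mem_range]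
    omega
  · intro x hx y hy h
    simp only [mem_filter, mem3] at hx hy
    funext i
    fin_cases i
    · show x 0 = y 0; omega
    · show x 1 = y 1; omega
    · show x 2 = y 2; omega
  · intro a ha
    simp only [mem_range] at ha
    refine ⟨![a, k - 1 - a, k], ?_, ?_⟩
    · simp only [mem_filter, mem3]
      simp
      omega
    · simp

lemma B_card (k : ℕ) (hk : 1 ≤ k) :
    ((Finset.Nat.antidiagonalTuple 3 (2*k - 1)).filter
      (fun x => x 0 ⊔ (x 1 ⊔ x 2) = k)).card = 3 * k := by
  have hsplit : (Finset.Nat.antidiagonalTuple 3 (2*k - 1)).filter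
      (fun x => x 0 ⊔ (x 1 ⊔ x 2) = k)
    = ((Finset.Nat.antidiagonalTuple 3 (2*k - 1)).filter
        (fun x => (x 0 ⊔ (x 1 ⊔ x 2) = k) ∧ x 0 = k))
      ∪ (((Finset.Nat.antidiagonalTuple 3 (2*k - 1)).filter
        (fun x => (x 0 ⊔ (x 1 ⊔ x 2) = k) ∧ x 1 = k))
      ∪ ((Finset.Nat.antidiagonalTuple 3 (2*k - 1)).filter
        (fun x => (x 0 ⊔ (x 1 ⊔ x 2) = k) ∧ x 2 = k))) := by
    rw [← Finset.filter_or, ← Finset.filter_or]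
    apply Finset.filter_congr
    intro x hx
    rw [mem3] at hx
    constructor
    · intro h; omega
    · intro h; omega
  rw [hsplit]
  rw [Finset.card_union_of_disjoint, Finset.card_union_of_disjoint,
    Bi_card0 k hk, Bi_card1 k hk, Bi_card2 k hk]
  · ring
  · rw [Finset.disjoint_left]
    intro x hx hx'
    simp only [mem_filter, mem3] at hx hx'
    omega
  · rw [Finset.disjoint_left]
    intro x hx hx'
    simp only [mem_filter, mem_union, mem_filter, mem3] at hx hx'
    rcases hx' with h | h <;> omega



open Finset

/-- `δ = 3` case: each composition `(x₁, x₂, x₃)` of `n − 1` into three nonnegative parts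
has probability `2/(n(n+1))`; the sum over `max x_j < n/2` plus half the sum over
`max x_j = n/2` equals `1/4 + (3/4)·1/(2⌊n/2⌋ + 1)`. -/
theorem three_regular_detection_probability (n : ℕ) (hn : 1 ≤ n) :
    (∑ x ∈ (Finset.Nat.antidiagonalTuple 3 (n - 1)).filter
        (fun x => 2 * Finset.univ.sup x < n), (2 : ℚ) / ((n : ℚ) * ((n : ℚ) + 1)))
      + (1 / 2) * ∑ x ∈ (Finset.Nat.antidiagonalTuple 3 (n - 1)).filter
          (fun x => 2 * Finset.univ.sup x = n), (2 : ℚ) / ((n : ℚ) * ((n : ℚ) + 1))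
    = 1 / 4 + (3 / 4) * (1 / (2 * ((n / 2 : ℕ) : ℚ) + 1)) := by
  rw [Finset.sum_const, Finset.sum_const, nsmul_eq_mul, nsmul_eq_mul]
  obtain ⟨k, hk | hk⟩ := Nat.even_or_odd' n
  · -- n = 2k
    have hk1 : 1 ≤ k := by omega
    subst hk
    have hA : ((Finset.Nat.antidiagonalTuple 3 (2*k - 1)).filter
        (fun x => 2 * Finset.univ.sup x < 2*k)).card * 2 = (k-1)*k := by
      have hfil : (Finset.Nat.antidiagonalTuple 3 (2*k - 1)).filter
          (fun x => 2 * Finset.univ.sup x < 2*k)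
        = (Finset.Nat.antidiagonalTuple 3 (2*k - 1)).filter
          (fun x => x 0 ≤ k - 1 ∧ x 1 ≤ k - 1 ∧ x 2 ≤ k - 1) :=
        Finset.filter_congr (by intro x _; rw [sup3]; constructor <;> intro h <;> omega)
      rw [hfil]
      exact A_even k hk1
    have hB : ((Finset.Nat.antidiagonalTuple 3 (2*k - 1)).filter
        (fun x => 2 * Finset.univ.sup x = 2*k)).card = 3 * k := by
      have hfil : (Finset.Nat.antidiagonalTuple 3 (2*k - 1)).filter
          (fun x => 2 * Finset.univ.sup x = 2*k)
        = (Finset.Nat.antidiagonalTuple 3 (2*k - 1)).filter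
          (fun x => x 0 ⊔ (x 1 ⊔ x 2) = k) :=
        Finset.filter_congr (by intro x _; rw [sup3]; constructor <;> intro h <;> omega)
      rw [hfil]
      exact B_card k hk1
    rw [hB, show (2*k) / 2 = k from by omega]
    set A := ((Finset.Nat.antidiagonalTuple 3 (2*k - 1)).filter
        (fun x => 2 * Finset.univ.sup x < 2*k)).card with hAdef
    have hAq : (A : ℚ) * 2 = ((k:ℚ) - 1) * k := by
      have := hA
      have h2 : ((A * 2 : ℕ) : ℚ) = (((k-1)*k : ℕ) : ℚ) := by rw [this]
      push_cast [Nat.cast_sub hk1] at h2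
      push_cast
      linarith
    have hkq : (1 : ℚ) ≤ (k : ℚ) := by exact_mod_cast hk1
    have h1 : (k : ℚ) ≠ 0 := by linarith
    have h2 : 2 * (k : ℚ) + 1 ≠ 0 := by positivity
    have h3 : ((2*k : ℕ) : ℚ) = 2 * (k : ℚ) := by push_cast; ring
    rw [h3]
    have h4 : (2 * (k:ℚ)) * (2 * (k:ℚ) + 1) ≠ 0 := by positivity
    field_simp
    push_cast
    nlinarith [hAq, sq_nonneg ((k:ℚ))]
  · -- n = 2k + 1
    subst hk
    have hA : ((Finset.Nat.antidiagonalTuple 3 (2*k + 1 - 1)).filter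
        (fun x => 2 * Finset.univ.sup x < 2*k + 1)).card * 2 = (k+1)*(k+2) := by
      rw [show 2*k + 1 - 1 = 2*k from by omega]
      have hfil : (Finset.Nat.antidiagonalTuple 3 (2*k)).filter
          (fun x => 2 * Finset.univ.sup x < 2*k + 1)
        = (Finset.Nat.antidiagonalTuple 3 (2*k)).filter
          (fun x => x 0 ≤ k ∧ x 1 ≤ k ∧ x 2 ≤ k) :=
        Finset.filter_congr (by intro x _; rw [sup3]; constructor <;> intro h <;> omega)
      rw [hfil]
      exact A_odd k
    have hB : ((Finset.Nat.antidiagonalTuple 3 (2*k + 1 - 1)).filter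
        (fun x => 2 * Finset.univ.sup x = 2*k + 1)).card = 0 := by
      rw [Finset.card_eq_zero, Finset.filter_eq_empty_iff]
      intro x hx
      rw [sup3]
      omega
    rw [hB, show (2*k+1) / 2 = k from by omega]
    set A := ((Finset.Nat.antidiagonalTuple 3 (2*k + 1 - 1)).filter
        (fun x => 2 * Finset.univ.sup x < 2*k + 1)).card with hAdef
    have hAq : (A : ℚ) * 2 = ((k:ℚ) + 1) * ((k:ℚ) + 2) := by
      have h2 : ((A * 2 : ℕ) : ℚ) = (((k+1)*(k+2) : ℕ) : ℚ) := by rw [hA]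
      push_cast at h2
      push_cast
      linarith
    have h1 : ((2*k + 1 : ℕ) : ℚ) = 2 * (k:ℚ) + 1 := by push_cast; ring
    rw [h1]
    have h2 : 2 * (k : ℚ) + 1 ≠ 0 := by positivity
    have h3 : 2 * (k : ℚ) + 2 ≠ 0 := by positivity
    field_simp
    push_cast
    nlinarith [hAq]
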